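/- Let X be a topological space and p a point of X with no finite local base. Then the local Noetherian type χNt(p,X) (the least infinite κ for which p has a κ^op-like local base) equals the least infinite κ for which there exists a local ⟨χ(p,X), κ⟩-splitter at p. Moreover, if λ > χ(p,X), then there is no local ⟨λ,κ⟩-splitter at p for any κ < λ or κ ≤ cf(λ). -/
import Mathlib


open Cardinal Set

universe u

variable {X : Type u}

/-- `B` is a base for the topology of `X`. -/
def IsBase [TopologicalSpace X] (B : Set (Set X)) : Prop :=
  (∀ U ∈ B, IsOpen U) ∧ ∀ W : Set X, IsOpen W → ∀ p ∈ W, ∃ U ∈ B, p ∈ U ∧ U ⊆ W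

/-- `B` is a local base at `p`. -/
def IsLocalBase [TopologicalSpace X] (p : X) (B : Set (Set X)) : Prop :=
  (∀ U ∈ B, IsOpen U ∧ p ∈ U) ∧ ∀ W : Set X, IsOpen W → p ∈ W → ∃ U ∈ B, U ⊆ W

/-- `B` is a local π-base at `p`. -/
def IsLocalPiBase [TopologicalSpace X] (p : X) (B : Set (Set X)) : Prop :=
  (∀ U ∈ B, IsOpen U ∧ U.Nonempty) ∧ ∀ W : Set X, IsOpen W → p ∈ W → ∃ U ∈ B, U ⊆ W

/-- The weight of `X`: the least infinite cardinal `κ` such that `X` has a base of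
cardinality at most `κ`. -/
noncomputable def weight (X : Type u) [TopologicalSpace X] : Cardinal.{u} :=
  sInf {κ | ℵ₀ ≤ κ ∧ ∃ B : Set (Set X), IsBase B ∧ #B ≤ κ}

/-- The character of `p` in `X`. -/
noncomputable def character [TopologicalSpace X] (p : X) : Cardinal.{u} :=
  sInf {κ | ℵ₀ ≤ κ ∧ ∃ B : Set (Set X), IsLocalBase p B ∧ #B ≤ κ}

/-- The π-character of `p` in `X`. -/
noncomputable def piCharacter [TopologicalSpace X] (p : X) : Cardinal.{u} :=
  sInf {κ | ℵ₀ ≤ κ ∧ ∃ B : Set (Set X), IsLocalPiBase p B ∧ #B ≤ κ}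

/-- A family of sets (ordered by `⊆`) is `κ^op`-like if no member is contained in
`κ`-many members. -/
def IsOpLike {Y : Type u} (B : Set (Set Y)) (κ : Cardinal.{u}) : Prop :=
  ∀ U ∈ B, #{V : Set Y // V ∈ B ∧ U ⊆ V} < κ

/-- The Noetherian type of `X`: the least infinite `κ` such that `X` has a
`κ^op`-like base. -/
noncomputable def Nt (X : Type u) [TopologicalSpace X] : Cardinal.{u} :=
  sInf {κ | ℵ₀ ≤ κ ∧ ∃ B : Set (Set X), IsBase B ∧ IsOpLike B κ}

/-- `⟨F i⟩` is a `⟨#ι, κ⟩`-splitter of `X`: a sequence of finite open covers such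
that for every index set `I` of cardinality `κ` and every choice `U i ∈ F i`
(`i ∈ I`), the interior of `⋂_{i ∈ I} U i` is empty. -/
def IsSplitter [TopologicalSpace X] {ι : Type u} (F : ι → Set (Set X))
    (κ : Cardinal.{u}) : Prop :=
  (∀ i, (F i).Finite ∧ (∀ U ∈ F i, IsOpen U) ∧ ⋃₀ F i = Set.univ) ∧
  ∀ (I : Set ι) (U : ι → Set X), #I = κ → (∀ i ∈ I, U i ∈ F i) →
    interior (⋂ i ∈ I, U i) = ∅

/-- The local Noetherian type of `p`: the least infinite `κ` such that `p` has a
`κ^op`-like local base. -/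
noncomputable def locNt [TopologicalSpace X] (p : X) : Cardinal.{u} :=
  sInf {κ | ℵ₀ ≤ κ ∧ ∃ B : Set (Set X), IsLocalBase p B ∧ IsOpLike B κ}

/-- `U` is a local `⟨#U, κ⟩`-splitter at `p`: a family of open neighborhoods of `p`
such that `p` is not in the interior of `⋂ V` for any `V ∈ [U]^κ`. -/
def IsLocalSplitter [TopologicalSpace X] (p : X) (U : Set (Set X))
    (κ : Cardinal.{u}) : Prop :=
  (∀ V ∈ U, IsOpen V ∧ p ∈ V) ∧
  ∀ V ⊆ U, #V = κ → p ∉ interior (⋂₀ V)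

section Aux

variable [TopologicalSpace X] {p : X}

lemma aux_character_mem (p : X) :
    character p ∈ {κ | ℵ₀ ≤ κ ∧ ∃ B : Set (Set X), IsLocalBase p B ∧ #B ≤ κ} := by
  apply csInf_mem
  refine ⟨max ℵ₀ #({U : Set X | IsOpen U ∧ p ∈ U}), le_max_left _ _,
    {U | IsOpen U ∧ p ∈ U}, ⟨fun U hU => hU, fun W hW hpW => ⟨W, ⟨hW, hpW⟩, subset_rfl⟩⟩,
    le_max_right _ _⟩

lemma aux_character_le (hnf : ∀ B : Set (Set X), IsLocalBase p B → B.Infinite)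
    {B : Set (Set X)} (hB : IsLocalBase p B) : character p ≤ #B :=
  csInf_le' ⟨Cardinal.aleph0_le_mk_iff.mpr (Set.infinite_coe_iff.mpr (hnf B hB)), B, hB, le_rfl⟩

lemma aux_exists_localBase_card_eq (hnf : ∀ B : Set (Set X), IsLocalBase p B → B.Infinite) :
    ∃ B : Set (Set X), IsLocalBase p B ∧ #B = character p := by
  obtain ⟨-, B, hB, hBle⟩ := aux_character_mem p
  exact ⟨B, hB, le_antisymm hBle (aux_character_le hnf hB)⟩

lemma aux_locNt_mem (p : X) :
    locNt p ∈ {κ | ℵ₀ ≤ κ ∧ ∃ B : Set (Set X), IsLocalBase p B ∧ IsOpLike B κ} := by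
  apply csInf_mem
  obtain ⟨-, B, hB, -⟩ := aux_character_mem p
  refine ⟨max (Order.succ #B) ℵ₀, le_max_right _ _, B, hB, fun U hU => ?_⟩
  have h1 : #{V : Set X // V ∈ B ∧ U ⊆ V} ≤ #B :=
    Cardinal.mk_subtype_mono fun V h => h.1
  exact lt_of_le_of_lt h1 (lt_of_lt_of_le (Order.lt_succ _) (le_max_left _ _))

/-- From a `⟨χ(p), κ⟩`-splitter, get a `κ^op`-like local base, hence `locNt p ≤ κ`. -/
lemma aux_locNt_le_of_splitter (hnf : ∀ B : Set (Set X), IsLocalBase p B → B.Infinite)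
    {κ : Cardinal.{u}} (hκ : ℵ₀ ≤ κ) {U : Set (Set X)}
    (hU : #U = character p) (hs : IsLocalSplitter p U κ) : locNt p ≤ κ := by
  obtain ⟨B, hB, hBcard⟩ := aux_exists_localBase_card_eq hnf
  have hcard : #B = #U := by rw [hBcard, hU]
  obtain ⟨e⟩ := Cardinal.eq.mp hcard
  set F : B → Set X := fun b => (b : Set X) ∩ ((e b : Set X)) with hF
  set B' : Set (Set X) := Set.range F with hB'
  have hB'mem : ∀ b : B, IsOpen (F b) ∧ p ∈ F b := by
    intro b
    have h1 := hB.1 b b.2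
    have h2 := hs.1 (e b) (e b).2
    exact ⟨h1.1.inter h2.1, h1.2, h2.2⟩
  have hB'base : IsLocalBase p B' := by
    constructor
    · rintro W ⟨b, rfl⟩
      exact hB'mem b
    · intro W hW hpW
      obtain ⟨V, hV, hVW⟩ := hB.2 W hW hpW
      exact ⟨F ⟨V, hV⟩, ⟨⟨V, hV⟩, rfl⟩, Set.inter_subset_left.trans hVW⟩
  have hop : IsOpLike B' κ := by
    rintro W₀ hW₀mem
    by_contra hge
    push_neg at hge
    obtain ⟨b₀, rfl⟩ := hW₀mem
    set G : {V : Set X // V ∈ B' ∧ F b₀ ⊆ V} → Set X :=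
      fun V => ((e V.2.1.choose : Set X)) with hG
    have hGspec : ∀ V : {V : Set X // V ∈ B' ∧ F b₀ ⊆ V}, F V.2.1.choose = V.1 :=
      fun V => V.2.1.choose_spec
    have hGinj : Function.Injective G := by
      intro V V' hVV'
      have h1 : e V.2.1.choose = e V'.2.1.choose := Subtype.coe_injective hVV'
      have h2 : V.2.1.choose = V'.2.1.choose := e.injective h1
      apply Subtype.ext
      rw [← hGspec V, ← hGspec V', h2]
    have hrange : Set.range G ⊆ U := by
      rintro _ ⟨V, rfl⟩
      exact (e V.2.1.choose).2
    have hκle : κ ≤ #(Set.range G) := by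
      rw [Cardinal.mk_range_eq G hGinj]
      exact hge
    obtain ⟨T, hTsub, hTcard⟩ := Cardinal.le_mk_iff_exists_subset.mp hκle
    have hnotin := hs.2 T (hTsub.trans hrange) hTcard
    apply hnotin
    have hsub : F b₀ ⊆ ⋂₀ T := by
      intro x hx
      apply Set.mem_sInter.mpr
      intro t ht
      obtain ⟨V, rfl⟩ := hTsub ht
      have h1 : F b₀ ⊆ V.1 := V.2.2
      have h2 : V.1 ⊆ G V := by
        rw [← hGspec V]
        exact Set.inter_subset_right
      exact h2 (h1 hx)
    exact interior_maximal hsub (hB'mem b₀).1 (hB'mem b₀).2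
  exact csInf_le' ⟨hκ, B', hB'base, hop⟩

/-- The pruned `κ^op`-like local base of cardinality `χ(p)` is itself a splitter. -/
lemma aux_exists_splitter (hnf : ∀ B : Set (Set X), IsLocalBase p B → B.Infinite) :
    ∃ U : Set (Set X), #U = character p ∧ IsLocalSplitter p U (locNt p) := by
  obtain ⟨hκ, B₁, hB₁, hop⟩ := aux_locNt_mem p
  obtain ⟨-, C, hC, hCcard⟩ := aux_character_mem p
  have hch : ∀ c : C, ∃ V ∈ B₁, V ⊆ (c : Set X) := fun c =>
    hB₁.2 c (hC.1 c c.2).1 (hC.1 c c.2).2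
  choose g hg1 hg2 using hch
  set B₂ : Set (Set X) := Set.range g with hB₂
  have hB₂sub : B₂ ⊆ B₁ := by rintro _ ⟨c, rfl⟩; exact hg1 c
  have hB₂base : IsLocalBase p B₂ := by
    constructor
    · intro V hV; exact hB₁.1 V (hB₂sub hV)
    · intro W hW hpW
      obtain ⟨c, hc, hcW⟩ := hC.2 W hW hpW
      exact ⟨g ⟨c, hc⟩, ⟨⟨c, hc⟩, rfl⟩, (hg2 ⟨c, hc⟩).trans hcW⟩
  have hB₂card : #B₂ = character p :=
    le_antisymm (Cardinal.mk_range_le.trans hCcard) (aux_character_le hnf hB₂base)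
  refine ⟨B₂, hB₂card, hB₂base.1, ?_⟩
  intro V hVsub hVcard hpmem
  obtain ⟨b, hb, hbsub⟩ := hB₂base.2 _ isOpen_interior hpmem
  have hmono : ∀ W, W ∈ V → W ∈ B₁ ∧ b ⊆ W := fun W hW =>
    ⟨hB₂sub (hVsub hW), hbsub.trans (interior_subset.trans (Set.sInter_subset_of_mem hW))⟩
  have hle : #V ≤ #{W : Set X // W ∈ B₁ ∧ b ⊆ W} := Cardinal.mk_subtype_mono hmono
  rw [hVcard] at hle
  exact absurd (hop b (hB₂sub hb)) (not_lt.mpr hle)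

end Aux

/-- Lemma: if `p` has no finite local base then `χNt(p,X)` is the least infinite `κ`
for which there is a local `⟨χ(p,X), κ⟩`-splitter at `p`; moreover, for `λ > χ(p,X)`
there is no local `⟨λ,κ⟩`-splitter at `p` for any infinite `κ < λ` or `κ ≤ cf λ`. -/
theorem locNt_eq_least_local_splitter
    [TopologicalSpace X] (p : X)
    (hnf : ∀ B : Set (Set X), IsLocalBase p B → B.Infinite) :
    locNt p =
      sInf {κ | ℵ₀ ≤ κ ∧ ∃ U : Set (Set X), #U = character p ∧ IsLocalSplitter p U κ} ∧
    ∀ lam κ' : Cardinal.{u}, ℵ₀ ≤ κ' → character p < lam →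
      (κ' < lam ∨ κ' ≤ lam.ord.cof) →
      ¬ ∃ U : Set (Set X), #U = lam ∧ IsLocalSplitter p U κ' := by
  constructor
  · -- the equality
    obtain ⟨Us, hUs, hsplit⟩ := aux_exists_splitter hnf
    have hκ0 : ℵ₀ ≤ locNt p := (aux_locNt_mem p).1
    have hmem : locNt p ∈
        {κ | ℵ₀ ≤ κ ∧ ∃ U : Set (Set X), #U = character p ∧ IsLocalSplitter p U κ} :=
      ⟨hκ0, Us, hUs, hsplit⟩
    refine le_antisymm ?_ (csInf_le' hmem)
    obtain ⟨hκ, U, hU, hs⟩ := csInf_mem (Set.nonempty_of_mem hmem)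
    exact aux_locNt_le_of_splitter hnf hκ hU hs
  · -- the "moreover" part
    rintro lam κ' hκ' hchar hcase ⟨U, hUcard, hs⟩
    obtain ⟨-, B, hB, hBcard⟩ := aux_character_mem p
    have hch : ∀ V : U, ∃ b ∈ B, b ⊆ (V : Set X) := fun V =>
      hB.2 V (hs.1 V V.2).1 (hs.1 V V.2).2
    choose f hf1 hf2 using hch
    set f' : U → B := fun V => ⟨f V, hf1 V⟩ with hf'
    have key : ∃ b : B, κ' ≤ #{V : U // f' V = b} := by
      by_contra hno
      push_neg at hno
      have hsum : #U = Cardinal.sum fun b : B => #{V : U // f' V = b} := by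
        rw [← Cardinal.mk_sigma]
        exact (Cardinal.mk_congr (Equiv.sigmaFiberEquiv f')).symm
      have hBlt : #B < lam := lt_of_le_of_lt hBcard hchar
      have hlam : lam ≤ Cardinal.sum fun b : B => #{V : U // f' V = b} := by
        rw [← hUcard]; exact le_of_eq hsum
      rcases lt_or_ge κ' lam with hlt | hge
      · -- small case : κ' < lam
        have h1 : (Cardinal.sum fun b : B => #{V : U // f' V = b}) ≤
            Cardinal.sum fun _ : B => κ' :=
          Cardinal.sum_le_sum _ _ fun b => (hno b).le
        rw [Cardinal.sum_const'] at h1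
        have h2 : #B * κ' ≤ max (max #B κ') ℵ₀ := Cardinal.mul_le_max _ _
        have h3 : max (max #B κ') ℵ₀ < lam :=
          max_lt (max_lt hBlt hlt) (lt_of_le_of_lt hκ' hlt)
        exact absurd (hlam.trans (h1.trans h2)) (not_le.mpr h3)
      · -- regular case : lam ≤ κ' and κ' ≤ cf lam
        have hcof : κ' ≤ lam.ord.cof := by
          rcases hcase with h | h
          · exact absurd h (not_lt.mpr hge)
          · exact h
        have hreg : lam.IsRegular := ⟨(aux_character_mem p).1.trans hchar.le, hge.trans hcof⟩
        have hfib : ∀ b : B, #{V : U // f' V = b} < lam := fun b =>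
          lt_of_lt_of_le (hno b) (hcof.trans (Ordinal.cof_ord_le lam))
        exact absurd hlam
          (not_le.mpr (Cardinal.sum_lt_of_isRegular hreg hBlt hfib))
    obtain ⟨b, hb⟩ := key
    obtain ⟨S, hScard⟩ := Cardinal.le_mk_iff_exists_set.mp hb
    set T : Set (Set X) := (fun x : {V : U // f' V = b} => ((x.1 : Set X))) '' S with hT
    have hTU : T ⊆ U := by rintro _ ⟨x, -, rfl⟩; exact x.1.2
    have hinj : Function.Injective (fun x : {V : U // f' V = b} => ((x.1 : Set X))) :=
      fun x y hxy => Subtype.ext (Subtype.ext hxy)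
    have hTcard : #T = κ' := by
      rw [hT, Cardinal.mk_image_eq_of_injOn _ _ hinj.injOn, hScard]
    apply hs.2 T hTU hTcard
    have hbV : ∀ x : {V : U // f' V = b}, (b : Set X) ⊆ (x.1 : Set X) := by
      intro x
      have h1 : f x.1 = (b : Set X) := congrArg Subtype.val x.2
      rw [← h1]
      exact hf2 x.1
    have hsub : (b : Set X) ⊆ ⋂₀ T := by
      intro y hy
      apply Set.mem_sInter.mpr
      rintro t ⟨x, -, rfl⟩
      exact hbV x hy
    exact interior_maximal hsub (hB.1 b b.2).1 (hB.1 b b.2).2
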